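/- Let M = (A,B,C,D) be a discrete-time system with system matrix S := [[A, B],[C, D]] ∈ ℂ^{(n+m)×(n+m)}. For ξ ≥ 0 define the structured perturbation Δ_S(ξ) := (ξ/(1+ξ))·(diag(0ₙ, I_m) − S), so that S + Δ_S(ξ) = (1/(1+ξ))·(S + diag(0ₙ, ξ·I_m)) is the system matrix of M_{−ξ}. Then: (i) the map ξ ↦ ‖Δ_S(ξ)‖₂ is nondecreasing on [0,∞); (ii) the set P := { ξ ≥ 0 : there exists Hermitian X > 0 with W̃(X, M_{−ξ}) ≥ 0 } is upward closed; consequently (iii) if Ξ := inf P belongs to P, then Δ_S(Ξ) has minimal spectral norm among all perturbations { Δ_S(ξ) : ξ ∈ P } of this type that make the system satisfy the passivity LMI. -/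

import Mathlib

open Matrix
open scoped ComplexOrder

/-- The spectral norm (largest singular value) of a complex matrix. -/
noncomputable def spNorm {k l : Type*} [Fintype k] [Fintype l] [DecidableEq k] [DecidableEq l]
    (A : Matrix k l ℂ) : ℝ :=
  ‖(Matrix.toEuclideanLin A).toContinuousLinearMap‖

/-- The matrix `W̃(X,M) = [[X, XA, XB],[AᴴX, X, Cᴴ],[BᴴX, C, Dᴴ + D]]`. -/
noncomputable def Wtil {n m : ℕ} (X A : Matrix (Fin n) (Fin n) ℂ)
    (B : Matrix (Fin n) (Fin m) ℂ) (C : Matrix (Fin m) (Fin n) ℂ)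
    (D : Matrix (Fin m) (Fin m) ℂ) :
    Matrix (Fin n ⊕ (Fin n ⊕ Fin m)) (Fin n ⊕ (Fin n ⊕ Fin m)) ℂ :=
  fromBlocks X (fromCols (X * A) (X * B)) (fromRows (Aᴴ * X) (Bᴴ * X))
    (fromBlocks X Cᴴ C (Dᴴ + D))

/-- A nonnegative real multiple of a PSD matrix is PSD. -/
lemma psdSMul {k : Type*} [Fintype k] {M : Matrix k k ℂ} (hM : M.PosSemidef)
    {c : ℝ} (hc : 0 ≤ c) : (c • M).PosSemidef := by
  refine PosSemidef.of_dotProduct_mulVec_nonneg ?_ ?_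
  · have := hM.1
    unfold Matrix.IsHermitian at *
    rw [conjTranspose_smul, star_trivial, this]
  · intro x
    have h := hM.dotProduct_mulVec_nonneg x
    rw [smul_mulVec, dotProduct_smul, Complex.real_smul]
    exact mul_nonneg (by exact_mod_cast hc) h

/-- The sum of PSD matrices is PSD. -/
lemma psdAdd {k : Type*} [Fintype k] {M N : Matrix k k ℂ} (hM : M.PosSemidef)
    (hN : N.PosSemidef) : (M + N).PosSemidef := by
  refine PosSemidef.of_dotProduct_mulVec_nonneg (hM.1.add hN.1) fun x => ?_
  rw [add_mulVec, dotProduct_add]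
  exact add_nonneg (hM.dotProduct_mulVec_nonneg x) (hN.dotProduct_mulVec_nonneg x)

/-- A block-diagonal matrix with PSD blocks is PSD. -/
lemma psdBlocks {k l : Type*} [Fintype k] [Fintype l] {M : Matrix k k ℂ}
    {N : Matrix l l ℂ} (hM : M.PosSemidef) (hN : N.PosSemidef) :
    (fromBlocks M 0 0 N).PosSemidef := by
  refine PosSemidef.of_dotProduct_mulVec_nonneg ?_ ?_
  · unfold Matrix.IsHermitian
    rw [fromBlocks_conjTranspose, conjTranspose_zero, conjTranspose_zero, hM.1, hN.1]
  · intro x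
    rw [fromBlocks_mulVec]
    have : dotProduct (star x) (Sum.elim (M *ᵥ (x ∘ Sum.inl) + 0 *ᵥ (x ∘ Sum.inr))
        (0 *ᵥ (x ∘ Sum.inl) + N *ᵥ (x ∘ Sum.inr))) =
        dotProduct (star (x ∘ Sum.inl)) (M *ᵥ (x ∘ Sum.inl)) +
        dotProduct (star (x ∘ Sum.inr)) (N *ᵥ (x ∘ Sum.inr)) := by
      simp [dotProduct, Fintype.sum_sum_type]
    rw [this]
    exact add_nonneg (hM.dotProduct_mulVec_nonneg _) (hN.dotProduct_mulVec_nonneg _)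

/-- The spectral norm scales by `|c|` under real scalar multiplication. -/
lemma spNormSmul {k l : Type*} [Fintype k] [Fintype l] [DecidableEq k] [DecidableEq l]
    (c : ℝ) (A : Matrix k l ℂ) : spNorm (c • A) = |c| * spNorm A := by
  unfold spNorm
  have h : c • A = (c : ℂ) • A := by
    ext i j; simp [Complex.real_smul]
  rw [h, _root_.map_smul, _root_.map_smul,
    norm_smul (c : ℂ) (Matrix.toEuclideanLin A).toContinuousLinearMap,
    Complex.norm_real, Real.norm_eq_abs]

/-- The key scaling identity `(1+ξ)·W̃(X, M_{−ξ}) = W̃(X,M) + ξ·diag(X,X,2I)`. -/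
lemma wtilScale {n m : ℕ} (ξ : ℝ) (X A : Matrix (Fin n) (Fin n) ℂ)
    (B : Matrix (Fin n) (Fin m) ℂ) (C : Matrix (Fin m) (Fin n) ℂ)
    (D : Matrix (Fin m) (Fin m) ℂ) (h : (1:ℝ) + ξ ≠ 0) :
    Wtil X ((1+ξ)⁻¹ • A) ((1+ξ)⁻¹ • B) ((1+ξ)⁻¹ • C)
      ((1+ξ)⁻¹ • (D + ξ • (1 : Matrix (Fin m) (Fin m) ℂ))) =
    (1+ξ)⁻¹ • (Wtil X A B C D +
      ξ • fromBlocks X 0 0 (fromBlocks X 0 0 ((1:Matrix (Fin m) (Fin m) ℂ) + 1))) := by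
  have hc : ((1:ℂ) + (ξ:ℂ)) ≠ 0 := by exact_mod_cast h
  ext i j
  obtain i | i | i := i <;> obtain j | j | j := j <;>
    simp [Wtil, Matrix.mul_smul, Matrix.smul_mul, Matrix.conjTranspose_smul,
      Matrix.smul_apply, Matrix.add_apply, Complex.real_smul, Matrix.one_apply,
      mul_add, add_mul] <;>
    (try split_ifs) <;> field_simp <;> ring

/-- with `S = [[A,B],[C,D]]` and the structured perturbation
`Δ_S(ξ) = (ξ/(1+ξ))·(diag(0,I_m) − S)` (so that `S + Δ_S(ξ)` is the system matrix of
`M_{−ξ}`): (i) `ξ ↦ ‖Δ_S(ξ)‖₂` is nondecreasing on `[0,∞)`; (ii) the set `P` of `ξ ≥ 0`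
for which `M_{−ξ}` satisfies the passivity LMI is upward closed; (iii) if `Ξ = inf P ∈ P`
then `Δ_S(Ξ)` has minimal spectral norm among all perturbations `Δ_S(ξ)`, `ξ ∈ P`. -/
theorem stmt17 {n m : ℕ} (A : Matrix (Fin n) (Fin n) ℂ) (B : Matrix (Fin n) (Fin m) ℂ)
    (C : Matrix (Fin m) (Fin n) ℂ) (D : Matrix (Fin m) (Fin m) ℂ)
    (S : Matrix (Fin n ⊕ Fin m) (Fin n ⊕ Fin m) ℂ) (hS : S = fromBlocks A B C D)
    (ΔS : ℝ → Matrix (Fin n ⊕ Fin m) (Fin n ⊕ Fin m) ℂ)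
    (hΔS : ∀ ξ : ℝ, ΔS ξ = (ξ / (1 + ξ)) •
      (fromBlocks (0 : Matrix (Fin n) (Fin n) ℂ) 0 0 (1 : Matrix (Fin m) (Fin m) ℂ) - S))
    (P : Set ℝ)
    (hP : P = {ξ : ℝ | 0 ≤ ξ ∧ ∃ X : Matrix (Fin n) (Fin n) ℂ, X.PosDef ∧
      (Wtil X ((1 + ξ)⁻¹ • A) ((1 + ξ)⁻¹ • B) ((1 + ξ)⁻¹ • C)
        ((1 + ξ)⁻¹ • (D + ξ • (1 : Matrix (Fin m) (Fin m) ℂ)))).PosSemidef}) :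
    -- the structured perturbation is indeed the system matrix of `M_{−ξ}`
    (∀ ξ : ℝ, 0 ≤ ξ → S + ΔS ξ = (1 + ξ)⁻¹ •
      (S + fromBlocks (0 : Matrix (Fin n) (Fin n) ℂ) 0 0
        (ξ • (1 : Matrix (Fin m) (Fin m) ℂ))))
    -- (i)
    ∧ (∀ ξ₁ ξ₂ : ℝ, 0 ≤ ξ₁ → ξ₁ ≤ ξ₂ → spNorm (ΔS ξ₁) ≤ spNorm (ΔS ξ₂))
    -- (ii)
    ∧ (∀ ξ₁ ∈ P, ∀ ξ₂ : ℝ, ξ₁ ≤ ξ₂ → ξ₂ ∈ P)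
    -- (iii)
    ∧ (sInf P ∈ P → ∀ ξ ∈ P, spNorm (ΔS (sInf P)) ≤ spNorm (ΔS ξ)) := by
  have part0 : ∀ ξ : ℝ, 0 ≤ ξ → S + ΔS ξ = (1 + ξ)⁻¹ •
      (S + fromBlocks (0 : Matrix (Fin n) (Fin n) ℂ) 0 0
        (ξ • (1 : Matrix (Fin m) (Fin m) ℂ))) := by
    intro ξ hξ
    have h1 : (1:ℝ) + ξ ≠ 0 := by positivity
    rw [hΔS]
    have hE : fromBlocks (0 : Matrix (Fin n) (Fin n) ℂ) 0 0
        (ξ • (1 : Matrix (Fin m) (Fin m) ℂ)) = ξ •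
        fromBlocks (0 : Matrix (Fin n) (Fin n) ℂ) 0 0 (1 : Matrix (Fin m) (Fin m) ℂ) := by
      simp [fromBlocks_smul]
    rw [hE]
    match_scalars <;> field_simp <;> ring
  have part1 : ∀ ξ₁ ξ₂ : ℝ, 0 ≤ ξ₁ → ξ₁ ≤ ξ₂ → spNorm (ΔS ξ₁) ≤ spNorm (ΔS ξ₂) := by
    intro ξ₁ ξ₂ h1 h12
    rw [hΔS, hΔS, spNormSmul, spNormSmul]
    have hp1 : (0:ℝ) < 1 + ξ₁ := by linarith
    have hp2 : (0:ℝ) < 1 + ξ₂ := by linarith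
    have hfac : |ξ₁ / (1 + ξ₁)| ≤ |ξ₂ / (1 + ξ₂)| := by
      rw [abs_of_nonneg (div_nonneg h1 hp1.le),
        abs_of_nonneg (div_nonneg (by linarith) hp2.le)]
      rw [div_le_div_iff₀ hp1 hp2]
      nlinarith
    exact mul_le_mul_of_nonneg_right hfac (norm_nonneg _)
  have part2 : ∀ ξ₁ ∈ P, ∀ ξ₂ : ℝ, ξ₁ ≤ ξ₂ → ξ₂ ∈ P := by
    intro ξ₁ hξ₁ ξ₂ h12
    rw [hP] at hξ₁ ⊢
    obtain ⟨h0, X, hX, hW⟩ := hξ₁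
    have h0' : (0:ℝ) ≤ ξ₂ := le_trans h0 h12
    refine ⟨h0', X, hX, ?_⟩
    have h1 : (1:ℝ) + ξ₁ ≠ 0 := by positivity
    have h2 : (1:ℝ) + ξ₂ ≠ 0 := by positivity
    set K := fromBlocks X 0 0
      (fromBlocks X 0 0 ((1:Matrix (Fin m) (Fin m) ℂ) + 1)) with hK
    have hKpsd : K.PosSemidef :=
      psdBlocks hX.posSemidef (psdBlocks hX.posSemidef
        (psdAdd Matrix.PosSemidef.one Matrix.PosSemidef.one))
    rw [wtilScale ξ₂ X A B C D h2]
    rw [wtilScale ξ₁ X A B C D h1] at hW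
    set W := Wtil X A B C D with hWdef
    have hW1 : (W + ξ₁ • K).PosSemidef := by
      have := psdSMul hW (by positivity : (0:ℝ) ≤ 1 + ξ₁)
      rwa [smul_smul, mul_inv_cancel₀ h1, one_smul] at this
    have hsplit : W + ξ₂ • K = (W + ξ₁ • K) + (ξ₂ - ξ₁) • K := by
      rw [add_assoc, ← add_smul]; ring_nf
    have hW2 : (W + ξ₂ • K).PosSemidef := by
      rw [hsplit]
      exact psdAdd hW1 (psdSMul hKpsd (by linarith))
    exact psdSMul hW2 (by positivity)
  refine ⟨part0, part1, part2, ?_⟩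
  intro hInf ξ hξ
  have hbdd : BddBelow P := ⟨0, fun y hy => by rw [hP] at hy; exact hy.1⟩
  have h0 : 0 ≤ sInf P := by
    rw [hP]; rw [hP] at hInf; exact hInf.1
  exact part1 _ _ h0 (csInf_le hbdd hξ)
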